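/- arXiv:1601.03170 — 6 statements merged into one kernel-verified Lean document; each statement's English description precedes it below -/
import Mathlib

section
/- Dedekind's theorem: For a finite abelian group G with independent commuting variables x_g for g in G, the group determinant Θ(G) = det(x_{gh^{-1}})_{g,h ∈ G} factors as the product over all characters χ of G of the linear forms ∑_{g ∈ G} χ(g) x_g. -/
open MvPolynomial Matrix

set_option maxHeartbeats 1600000

/-- Dedekind's theorem: the group determinant of a finite abelian group factors
into linear forms indexed by the characters of the group. -/
theorem dedekind_theorem (G : Type*) [CommGroup G] [Fintype G] [DecidableEq G]
    [Fintype (G →* ℂˣ)] :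
    Matrix.det (Matrix.of fun g h : G => (MvPolynomial.X (g * h⁻¹) : MvPolynomial G ℂ)) =
      ∏ χ : G →* ℂˣ, ∑ g : G, ((χ g : ℂ)) • MvPolynomial.X g := by
  classical
  have hne : NeZero ((Monoid.exponent G : ℂ)) :=
    ⟨by exact_mod_cast Monoid.exponent_ne_zero_of_finite (G := G)⟩
  obtain ⟨σ⟩ := CommGroup.monoidHom_mulEquiv_of_hasEnoughRootsOfUnity G ℂ
  set L : (G →* ℂˣ) → (MvPolynomial G ℂ) := fun χ => ∑ g : G, ((χ g : ℂ)) • MvPolynomial.X g with hL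
  set M : Matrix G G (MvPolynomial G ℂ) := Matrix.of fun g h : G => (MvPolynomial.X (g * h⁻¹) : MvPolynomial G ℂ) with hM
  set V₀ : Matrix G G ℂ := Matrix.of fun g h : G => ((σ.symm g) h : ℂ) with hV₀
  set V : Matrix G G (MvPolynomial G ℂ) := Matrix.of fun g h : G => (C (((σ.symm g) h : ℂ)) : MvPolynomial G ℂ) with hV
  set D : Matrix G G (MvPolynomial G ℂ) := Matrix.diagonal (fun g => L (σ.symm g)) with hD
  -- the key identity : V * M = D * V
  have key : V * M = D * V := by
    refine Matrix.ext fun g h => ?_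
    rw [Matrix.mul_apply, Matrix.mul_apply]
    have hl : ∑ k : G, V g k * M k h
        = C (((σ.symm g) h : ℂ)) * ∑ m : G, C (((σ.symm g) m : ℂ)) * X m := by
      rw [Finset.mul_sum]
      rw [← Equiv.sum_comp (Equiv.mulRight h) (fun k => V g k * M k h)]
      refine Finset.sum_congr rfl fun m _ => ?_
      simp only [hV, hM, Matrix.of_apply, Equiv.coe_mulRight, mul_inv_cancel_right]
      rw [_root_.map_mul, Units.val_mul, _root_.map_mul]
      ring
    rw [hl]
    have hr : ∑ k : G, D g k * V k h
        = L (σ.symm g) * C (((σ.symm g) h : ℂ)) := by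
      rw [Finset.sum_eq_single g]
      · show Matrix.diagonal (fun g => L (σ.symm g)) g g * V g h = _
        rw [Matrix.diagonal_apply_eq]
        rfl
      · intro k _ hk
        show Matrix.diagonal (fun g => L (σ.symm g)) g k * V k h = 0
        rw [Matrix.diagonal_apply_ne' _ hk, zero_mul]
      · simp
    rw [hr, hL]
    simp only [MvPolynomial.smul_eq_C_mul]
    ring
  -- V is invertible since characters are linearly independent
  have hli : LinearIndependent ℂ (fun χ : G →* ℂˣ => (fun g => ((χ g : ℂ)) : G → ℂ)) := by
    have hinj : Function.Injective (fun χ : G →* ℂˣ => (Units.coeHom ℂ).comp χ) := by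
      intro χ ψ hc
      ext g
      exact DFunLike.congr_fun hc g
    exact (linearIndependent_monoidHom G ℂ).comp _ hinj
  have hrows : LinearIndependent ℂ (fun g : G => V₀ g) :=
    hli.comp (⇑σ.symm) σ.symm.injective
  have hV₀det : V₀.det ≠ 0 :=
    ((Matrix.isUnit_iff_isUnit_det V₀).mp
      (Matrix.linearIndependent_rows_iff_isUnit.mp hrows)).ne_zero
  have hVdet : V.det ≠ 0 := by
    have : V = (C : ℂ →+* MvPolynomial G ℂ).mapMatrix V₀ := by
      ext g h; simp [hV, hV₀]
    rw [this, ← RingHom.map_det]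
    exact fun hc => hV₀det (MvPolynomial.C_injective G ℂ (by simpa using hc))
  -- take determinants
  have hdets : V.det * M.det = V.det * (∏ χ : G →* ℂˣ, L χ) := by
    have h1 := congrArg Matrix.det key
    rw [Matrix.det_mul, Matrix.det_mul, Matrix.det_diagonal] at h1
    rw [h1, mul_comm]
    congr 1
    exact Equiv.prod_comp σ.symm.toEquiv L
  exact mul_left_cancel₀ hVdet hdets
end

section
/- Let G be a finite abelian group and H a subgroup. Then the product over all characters χ of G trivial on H of the elements ∑_{g ∈ G} χ(g) x_g g in the group algebra ℂ[x_g][G] is supported on H; that is, there exist homogeneous polynomials A_h ∈ ℂ[x_g] of degree [G:H] for each h ∈ H such that ∏_{χ ∈ Ĝ_H} ∑_{g ∈ G} χ(g) x_g g = ∑_{h ∈ H} A_h h. -/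
open Finset MvPolynomial

theorem card_chars (G : Type*) [CommGroup G] [Fintype G] (H : Subgroup G)
    [Fintype {χ : G →* ℂˣ // ∀ h ∈ H, χ h = 1}] :
    Fintype.card {χ : G →* ℂˣ // ∀ h ∈ H, χ h = 1} = H.index := by
  have e : {χ : G →* ℂˣ // ∀ h ∈ H, χ h = 1} ≃ ((G ⧸ H) →* ℂˣ) :=
    { toFun := fun χ => QuotientGroup.lift H χ.1 (fun h hh => χ.2 h hh)
      invFun := fun φ => ⟨φ.comp (QuotientGroup.mk' H), fun h hh => by
        rw [MonoidHom.comp_apply, QuotientGroup.mk'_apply,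
          (QuotientGroup.eq_one_iff h).mpr hh, map_one]⟩
      left_inv := fun χ => Subtype.ext (MonoidHom.ext fun g => rfl)
      right_inv := fun φ => MonoidHom.ext fun q => by
        induction q using QuotientGroup.induction_on with
        | H g => rfl }
  obtain ⟨e₂⟩ := CommGroup.monoidHom_mulEquiv_of_hasEnoughRootsOfUnity (G ⧸ H) ℂ
  rw [Subgroup.index_eq_card, ← Nat.card_eq_fintype_card,
    Nat.card_congr (e.trans e₂.toEquiv)]



/-- The product over the characters of `G` trivial on `H` of the elements
`∑ g, χ(g) x_g g` of the group algebra `ℂ[x_g][G]` is supported on `H`, with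
coefficients homogeneous of degree `[G : H]`. -/
theorem prod_characters_trivial_on_H_supported (G : Type*) [CommGroup G] [Fintype G]
    (H : Subgroup G) [Fintype {χ : G →* ℂˣ // ∀ h ∈ H, χ h = 1}] [Fintype H] :
    ∃ A : H → MvPolynomial G ℂ,
      (∀ h : H, (A h).IsHomogeneous H.index) ∧
      (∏ χ : {χ : G →* ℂˣ // ∀ h ∈ H, χ h = 1},
          ∑ g : G, MonoidAlgebra.single g ((χ.1 g : ℂ) • (MvPolynomial.X g : MvPolynomial G ℂ)))
        = ∑ h : H, MonoidAlgebra.single (h : G) (A h) := by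
    classical
  set π : ({χ : G →* ℂˣ // ∀ h ∈ H, χ h = 1} → G) → G :=
    fun f => ∏ χ : {χ : G →* ℂˣ // ∀ h ∈ H, χ h = 1}, f χ with hπ
  set u : ({χ : G →* ℂˣ // ∀ h ∈ H, χ h = 1} → G) → ℂ :=
    fun f => ∏ χ : {χ : G →* ℂˣ // ∀ h ∈ H, χ h = 1}, (χ.1 (f χ) : ℂ) with hu
  set M : ({χ : G →* ℂˣ // ∀ h ∈ H, χ h = 1} → G) → MvPolynomial G ℂ :=
    fun f => ∏ χ : {χ : G →* ℂˣ // ∀ h ∈ H, χ h = 1}, X (f χ) with hM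
  set S : G → MvPolynomial G ℂ :=
    fun g => ∑ f ∈ univ.filter (fun f : {χ : G →* ℂˣ // ∀ h ∈ H, χ h = 1} → G => π f = g),
      C (u f) * M f with hS
  -- Step 1: expansion of the product
  have expand : (∏ χ : {χ : G →* ℂˣ // ∀ h ∈ H, χ h = 1},
          ∑ g : G, MonoidAlgebra.single g ((χ.1 g : ℂ) • (X g : MvPolynomial G ℂ)))
      = ∑ g : G, MonoidAlgebra.single g (S g) := by
    have e1 := Finset.prod_univ_sum (fun _ : {χ : G →* ℂˣ // ∀ h ∈ H, χ h = 1} => (univ : Finset G))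
      (fun χ g => MonoidAlgebra.single g ((χ.1 g : ℂ) • (X g : MvPolynomial G ℂ)))
    rw [e1, Fintype.piFinset_univ]
    have h1 : ∀ f : {χ : G →* ℂˣ // ∀ h ∈ H, χ h = 1} → G,
        (∏ χ : {χ : G →* ℂˣ // ∀ h ∈ H, χ h = 1},
          MonoidAlgebra.single (f χ) ((χ.1 (f χ) : ℂ) • (X (f χ) : MvPolynomial G ℂ)))
        = MonoidAlgebra.single (π f) (C (u f) * M f) := by
      intro f
      rw [MonoidAlgebra.prod_single]
      congr 1
      show (∏ χ : {χ : G →* ℂˣ // ∀ h ∈ H, χ h = 1},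
          ((χ.1 (f χ) : ℂ) • (X (f χ) : MvPolynomial G ℂ)))
        = C (∏ χ : {χ : G →* ℂˣ // ∀ h ∈ H, χ h = 1}, (χ.1 (f χ) : ℂ))
          * ∏ χ : {χ : G →* ℂˣ // ∀ h ∈ H, χ h = 1}, X (f χ)
      simp_rw [smul_eq_C_mul, Finset.prod_mul_distrib, map_prod]
    rw [Finset.sum_congr rfl (fun f _ => h1 f),
      ← Finset.sum_fiberwise univ π
        (fun f => MonoidAlgebra.single (π f) (C (u f) * M f))]
    refine Finset.sum_congr rfl fun g _ => ?_
    refine (Finset.sum_congr rfl fun f hf => ?_).trans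
      (map_sum (MonoidAlgebra.singleAddHom g)
        (fun f : {χ : G →* ℂˣ // ∀ h ∈ H, χ h = 1} → G => C (u f) * M f)
        (univ.filter (fun f : {χ : G →* ℂˣ // ∀ h ∈ H, χ h = 1} → G => π f = g))).symm
    rw [(mem_filter.mp hf).2]
    rfl
  -- Step 2: vanishing off H
  have hS0 : ∀ g : G, g ∉ H → S g = 0 := by
    intro g hg
    obtain ⟨φ, hφ⟩ := CommGroup.exists_apply_ne_one_of_hasEnoughRootsOfUnity (G ⧸ H) ℂ
      (a := QuotientGroup.mk g) (by simpa [QuotientGroup.eq_one_iff] using hg)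
    set χ₀ : {χ : G →* ℂˣ // ∀ h ∈ H, χ h = 1} := ⟨φ.comp (QuotientGroup.mk' H), fun h hh => by
      rw [MonoidHom.comp_apply, QuotientGroup.mk'_apply,
        (QuotientGroup.eq_one_iff h).mpr hh, map_one]⟩ with hχ₀
    have hc1 : (χ₀.1 g : ℂ) ≠ 1 := fun h => hφ (Units.ext h)
    have hc0 : (χ₀.1 g : ℂ) ≠ 0 := Units.ne_zero _
    set e : {χ : G →* ℂˣ // ∀ h ∈ H, χ h = 1} ≃ {χ : G →* ℂˣ // ∀ h ∈ H, χ h = 1} :=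
      { toFun := fun χ => ⟨χ.1 * χ₀.1, fun h hh => by
          rw [MonoidHom.mul_apply, χ.2 h hh, χ₀.2 h hh, one_mul]⟩
        invFun := fun χ => ⟨χ.1 * χ₀.1⁻¹, fun h hh => by
          rw [MonoidHom.mul_apply, χ.2 h hh, MonoidHom.inv_apply, χ₀.2 h hh, inv_one, one_mul]⟩
        left_inv := fun χ => Subtype.ext
          (show (χ.1 * χ₀.1) * χ₀.1⁻¹ = χ.1 from mul_inv_cancel_right χ.1 χ₀.1)
        right_inv := fun χ => Subtype.ext
          (show (χ.1 * χ₀.1⁻¹) * χ₀.1 = χ.1 from inv_mul_cancel_right χ.1 χ₀.1) } with he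
    have key : S g = C ((χ₀.1 g : ℂ))⁻¹ * S g := by
      rw [hS, Finset.mul_sum]
      refine Finset.sum_nbij' (fun f => f ∘ e.symm) (fun f => f ∘ e) ?_ ?_ ?_ ?_ ?_
      · intro f hf
        rw [mem_filter] at hf ⊢
        exact ⟨mem_univ _, by rw [hπ, ← hf.2]; exact Equiv.prod_comp e.symm f⟩
      · intro f hf
        rw [mem_filter] at hf ⊢
        exact ⟨mem_univ _, by rw [hπ, ← hf.2]; exact Equiv.prod_comp e f⟩
      · intro f _; funext χ; simp
      · intro f _; funext χ; simp
      · intro f hf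
        rw [mem_filter] at hf
        have hM' : M (f ∘ e.symm) = M f := Equiv.prod_comp e.symm (fun χ => X (f χ))
        have hu' : u (f ∘ e.symm) = (χ₀.1 g : ℂ) * u f := by
          have step1 : u (f ∘ e.symm) = ∏ χ : {χ : G →* ℂˣ // ∀ h ∈ H, χ h = 1},
              ((e χ).1 (f χ) : ℂ) := by
            refine Fintype.prod_equiv e
              (fun χ => ((e χ).1 (f χ) : ℂ))
              (fun χ => (χ.1 ((f ∘ e.symm) χ) : ℂ)) (fun χ => ?_) |>.symm
            simp only [Function.comp_apply, Equiv.symm_apply_apply]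
          rw [step1]
          have hval : ∀ χ : {χ : G →* ℂˣ // ∀ h ∈ H, χ h = 1},
              ((e χ).1 (f χ) : ℂ) = (χ.1 (f χ) : ℂ) * (χ₀.1 (f χ) : ℂ) := by
            intro χ
            simp [he, Units.val_mul]
          rw [Finset.prod_congr rfl (fun χ _ => hval χ), Finset.prod_mul_distrib]
          have h1 : (∏ χ : {χ : G →* ℂˣ // ∀ h ∈ H, χ h = 1}, χ₀.1 (f χ)) = χ₀.1 g :=
            (map_prod χ₀.1 f univ).symm.trans (congrArg χ₀.1 hf.2)
          have hprod : (∏ χ : {χ : G →* ℂˣ // ∀ h ∈ H, χ h = 1}, (χ₀.1 (f χ) : ℂ))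
              = (χ₀.1 g : ℂ) := by
            rw [← h1]
            exact (map_prod (Units.coeHom ℂ) (fun χ => χ₀.1 (f χ)) univ).symm
          rw [hprod, mul_comm]
        rw [hM', hu', ← mul_assoc, ← map_mul,
          show ((χ₀.1 g : ℂ))⁻¹ * ((χ₀.1 g : ℂ) * u f) = u f by field_simp]
    have hfac : (1 - C ((χ₀.1 g : ℂ))⁻¹) * S g = 0 := by
      rw [sub_mul, one_mul, ← key, sub_self]
    rcases mul_eq_zero.mp hfac with h | h
    · exfalso
      rw [sub_eq_zero] at h
      have h1 : ((χ₀.1 g : ℂ))⁻¹ = 1 :=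
        MvPolynomial.C_injective _ _ (by rw [← h]; rfl)
      exact hc1 (inv_eq_one.mp h1)
    · exact h
  -- Step 3: assemble
  refine ⟨fun h => S h, fun h => ?_, ?_⟩
  · -- homogeneity
    refine MvPolynomial.IsHomogeneous.sum _ _ _ fun f _ => ?_
    have hMf : (M f).IsHomogeneous H.index := by
      have := MvPolynomial.IsHomogeneous.prod univ
        (fun χ : {χ : G →* ℂˣ // ∀ h ∈ H, χ h = 1} => X (f χ)) (fun _ => 1)
        (fun χ _ => isHomogeneous_X ℂ _)
      simpa [card_chars G H] using this
    exact hMf.C_mul _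
  · refine expand.trans ?_
    rw [← Finset.sum_filter_add_sum_filter_not univ (· ∈ H)
      (fun g => MonoidAlgebra.single g (S g))]
    have h2 : ∑ g ∈ univ.filter (fun g => ¬ g ∈ H), MonoidAlgebra.single g (S g) = 0 := by
      refine Finset.sum_eq_zero fun g hg => ?_
      rw [mem_filter] at hg
      rw [hS0 g hg.2, MonoidAlgebra.single_zero]
    rw [h2, add_zero]
    rw [Finset.sum_subtype (p := (· ∈ H)) (univ.filter (· ∈ H)) (fun g => by simp)
      (fun g => MonoidAlgebra.single g (S g))]
end

section
/- Let G be a finite abelian group with unit element e. Then in the group algebra ℂ[x_g][G], the product over all characters χ of G of the elements ∑_{g ∈ G} χ(g) x_g g equals Θ(G)·e, where Θ(G) = det(x_{gh^{-1}})_{g,h ∈ G} is the group determinant. -/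
open Finset

lemma sum_char_eq_zero {G : Type*} [CommGroup G] [Fintype G] {χ : G →* ℂˣ} (hχ : χ ≠ 1) :
    ∑ g : G, (χ g : ℂ) = 0 := by
  obtain ⟨a, ha⟩ : ∃ a, χ a ≠ 1 := by
    by_contra h; push_neg at h; exact hχ (MonoidHom.ext fun g => h g)
  have h1 : (χ a : ℂ) * ∑ g : G, (χ g : ℂ) = ∑ g : G, (χ g : ℂ) := by
    rw [Finset.mul_sum]
    exact Fintype.sum_equiv (Equiv.mulLeft a) _ _ (fun g => by simp)
  have h2 : ((χ a : ℂ) - 1) * ∑ g : G, (χ g : ℂ) = 0 := by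
    rw [sub_mul, one_mul, h1, sub_self]
  rcases mul_eq_zero.mp h2 with h | h
  · exact absurd (Units.ext (by linear_combination h : (χ a : ℂ) = 1)) ha
  · exact h

open MvPolynomial in
lemma groupDet_eq_prod {G : Type*} [CommGroup G] [Fintype G] [DecidableEq G]
    [Fintype (G →* ℂˣ)] (e : (G →* ℂˣ) ≃ G) :
    Matrix.det (Matrix.of fun g h : G => (MvPolynomial.X (g * h⁻¹) : MvPolynomial G ℂ))
      = ∏ χ : G →* ℂˣ, ∑ g : G, (χ g : ℂ) • (MvPolynomial.X g : MvPolynomial G ℂ) := by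
  classical
  set R := MvPolynomial G ℂ
  set M : Matrix G G R := Matrix.of fun g h : G => (X (g * h⁻¹) : R) with hM
  set Λ : (G →* ℂˣ) → R := fun χ => ∑ j : G, ((χ j : ℂ))⁻¹ • (X j : R) with hΛ
  set U₀ : Matrix G G ℂ := Matrix.of fun g h => ((e.symm h) g : ℂ) with hU₀
  set U : Matrix G G R := U₀.map C with hU
  set D : Matrix G G R := Matrix.diagonal (fun h => Λ (e.symm h)) with hD
  -- U₀ is invertible
  have hdetU₀ : U₀.det ≠ 0 := by
    set V₀ : Matrix G G ℂ := Matrix.of fun h g => (((e.symm h) g : ℂ))⁻¹ with hV₀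
    have hVU : V₀ * U₀ = (Fintype.card G : ℂ) • 1 := by
      refine Matrix.ext fun h h' => ?_
      rw [Matrix.mul_apply]
      by_cases hh : h = h'
      · subst hh
        simp only [Matrix.smul_apply, Matrix.one_apply_eq, smul_eq_mul, mul_one, hV₀, hU₀,
          Matrix.of_apply]
        rw [Finset.sum_congr rfl fun g _ => inv_mul_cancel₀ (Units.ne_zero _)]
        simp
      · have hne : (e.symm h)⁻¹ * (e.symm h') ≠ 1 := fun hc =>
          hh (e.symm.injective (inv_mul_eq_one.mp hc))
        have hz := sum_char_eq_zero hne
        simp only [MonoidHom.mul_apply, MonoidHom.inv_apply, Units.val_mul,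
          Units.val_inv_eq_inv_val] at hz
        simp only [hV₀, hU₀, Matrix.of_apply, Matrix.smul_apply, Matrix.one_apply_ne hh,
          smul_zero]
        exact hz
    intro hdet
    have hcd := congrArg Matrix.det hVU
    rw [Matrix.det_mul, hdet, mul_zero, Matrix.det_smul, Matrix.det_one, mul_one] at hcd
    exact pow_ne_zero _ (Nat.cast_ne_zero.mpr Fintype.card_ne_zero) hcd.symm
  have hUdet : U.det = C U₀.det := by
    rw [hU, ← RingHom.mapMatrix_apply, ← RingHom.map_det]
  have hdetU : U.det ≠ 0 := by
    rw [hUdet]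
    intro hc
    exact hdetU₀ (MvPolynomial.C_injective G ℂ (hc.trans (map_zero C).symm))
  -- the key intertwining identity
  have key : M * U = U * D := by
    refine Matrix.ext fun g h => ?_
    rw [Matrix.mul_apply, hD, Matrix.mul_diagonal]
    have hterm : ∀ k : G, M g k * U k h = X (g * k⁻¹) * C ((e.symm h) k : ℂ) := fun k => rfl
    simp only [hterm]
    rw [show U g h = C ((e.symm h) g : ℂ) from rfl, hΛ, Finset.mul_sum]
    refine (Fintype.sum_equiv ((Equiv.inv G).trans (Equiv.mulRight g)) _ _ fun j => ?_).symm
    simp only [Equiv.trans_apply, Equiv.inv_apply, Equiv.coe_mulRight, mul_inv_rev, inv_inv,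
      mul_inv_cancel_left, map_mul, map_inv, Units.val_mul, Units.val_inv_eq_inv_val,
      smul_eq_C_mul]
    ring
  -- conclude
  have hdet : M.det * U.det = U.det * D.det := by
    rw [← Matrix.det_mul, ← Matrix.det_mul, key]
  have hDdet : D.det = ∏ χ : G →* ℂˣ, Λ χ := by
    rw [hD, Matrix.det_diagonal]
    exact Equiv.prod_comp e.symm Λ
  have hfinal : M.det = ∏ χ : G →* ℂˣ, Λ χ := by
    have h1 : U.det * M.det = U.det * D.det := by rw [mul_comm, hdet]
    rw [← hDdet]
    exact mul_left_cancel₀ hdetU h1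
  rw [hfinal]
  refine Fintype.prod_equiv (Equiv.inv (G →* ℂˣ)) _ _ fun χ => ?_
  simp only [hΛ, Equiv.inv_apply, MonoidHom.inv_apply, Units.val_inv_eq_inv_val, inv_inv]


open MvPolynomial MonoidAlgebra

/-- In the group algebra `ℂ[x_g][G]` of a finite abelian group `G`, the product over all
characters of `G` of the elements `∑ g, χ(g) x_g g` equals `Θ(G)·e`, where `Θ(G)` is the
group determinant. -/
theorem prod_all_characters_eq_groupDet_smul_one (G : Type*) [CommGroup G] [Fintype G]
    [DecidableEq G] [Fintype (G →* ℂˣ)] :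
    (∏ χ : G →* ℂˣ,
        ∑ g : G, MonoidAlgebra.single g ((χ g : ℂ) • (MvPolynomial.X g : MvPolynomial G ℂ)))
      = MonoidAlgebra.single (1 : G)
          (Matrix.det (Matrix.of fun g h : G => (MvPolynomial.X (g * h⁻¹) : MvPolynomial G ℂ))) := by
  classical
  have hexp : NeZero (Monoid.exponent G) := ⟨Monoid.exponent_ne_zero_of_finite⟩
  have : NeZero ((Monoid.exponent G : ℂ)) := ⟨Nat.cast_ne_zero.mpr hexp.out⟩
  obtain ⟨me⟩ := CommGroup.monoidHom_mulEquiv_of_hasEnoughRootsOfUnity G ℂ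
  set R := MvPolynomial G ℂ
  set a : (G →* ℂˣ) → MonoidAlgebra R G :=
    fun χ => ∑ g : G, single g ((χ g : ℂ) • (X g : R)) with ha
  set P : MonoidAlgebra R G := ∏ χ : G →* ℂˣ, a χ with hP
  -- twisting automorphisms
  have fmul : ∀ (ψ : G →* ℂˣ) (g h : G),
      (single (g * h) (C ((ψ (g*h) : ℂ)) : R) : MonoidAlgebra R G)
        = single g (C (ψ g : ℂ)) * single h (C (ψ h : ℂ)) := by
    intro ψ g h
    rw [MonoidAlgebra.single_mul_single]
    congr 1
    rw [map_mul, Units.val_mul, map_mul]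
  set f : (G →* ℂˣ) → (G →* MonoidAlgebra R G) := fun ψ =>
    { toFun := fun g => single g (C (ψ g : ℂ)),
      map_one' := by simp [MonoidAlgebra.one_def],
      map_mul' := fun g h => fmul ψ g h } with hf
  set σ : (G →* ℂˣ) → (MonoidAlgebra R G →ₐ[R] MonoidAlgebra R G) := fun ψ =>
    MonoidAlgebra.lift R (MonoidAlgebra R G) G (f ψ) with hσ
  have hσa : ∀ ψ χ : G →* ℂˣ, σ ψ (a χ) = a (ψ * χ) := by
    intro ψ χ
    rw [ha]
    simp only [map_sum, hσ, MonoidAlgebra.lift_single]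
    refine Finset.sum_congr rfl fun g _ => ?_
    rw [hf]
    show ((χ g : ℂ) • (X g : R)) • (single g (C (ψ g : ℂ) : R) : MonoidAlgebra R G) = single g (((ψ * χ) g : ℂ) • X g)
    rw [MonoidAlgebra.smul_single']
    congr 1
    rw [smul_eq_C_mul, smul_eq_C_mul, MonoidHom.mul_apply, Units.val_mul, map_mul]
    ring
  have hσP : ∀ ψ : G →* ℂˣ, σ ψ P = P := by
    intro ψ
    rw [hP, map_prod]
    simp only [hσa]
    exact Fintype.prod_equiv (Equiv.mulLeft ψ) _ _ fun χ => rfl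
  -- coefficient formula for σ
  have hcoeff : ∀ (ψ : G →* ℂˣ) (Q : MonoidAlgebra R G) (g : G),
      (σ ψ Q).coeff g = Q.coeff g * C (ψ g : ℂ) := by
    intro ψ Q g
    induction Q using MonoidAlgebra.induction_linear with
    | zero => simp
    | add p q hp hq => rw [map_add, MonoidAlgebra.coeff_add, MonoidAlgebra.coeff_add, Finsupp.add_apply, Finsupp.add_apply, hp, hq, add_mul]
    | single h r =>
      rw [hσ]
      show ((MonoidAlgebra.lift R (MonoidAlgebra R G) G) (f ψ) (single h r)).coeff g = _
      rw [MonoidAlgebra.lift_single, hf]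
      show (r • (single h (C (ψ h : ℂ) : R) : MonoidAlgebra R G)).coeff g = _
      rw [MonoidAlgebra.smul_single']
      simp only [MonoidAlgebra.coeff_single]
      by_cases hhg : h = g
      · subst hhg; rw [Finsupp.single_eq_same, Finsupp.single_eq_same]
      · rw [Finsupp.single_eq_of_ne' hhg, Finsupp.single_eq_of_ne' hhg, zero_mul]
  -- vanishing of coefficients away from 1
  have hvanish : ∀ g : G, g ≠ 1 → P.coeff g = 0 := by
    intro g hg
    obtain ⟨ψ, hψ⟩ := CommGroup.exists_apply_ne_one_of_hasEnoughRootsOfUnity G ℂ hg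
    have h1 : P.coeff g * C (ψ g : ℂ) = P.coeff g := by
      conv_rhs => rw [← hσP ψ]
      rw [hcoeff]
    have h2 : P.coeff g * (C (ψ g : ℂ) - 1) = 0 := by
      rw [mul_sub, mul_one, h1, sub_self]
    rcases mul_eq_zero.mp h2 with h | h
    · exact h
    · exfalso
      apply hψ
      apply Units.ext
      have : (C (ψ g : ℂ) : R) = C 1 := by rw [map_one]; exact sub_eq_zero.mp h
      have := MvPolynomial.C_injective G ℂ this
      simpa using this
  -- the augmentation map
  set ε : MonoidAlgebra R G →ₐ[R] R := MonoidAlgebra.lift R R G 1 with hε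
  have hεP : ε P = ∏ χ : G →* ℂˣ, ∑ g : G, (χ g : ℂ) • (X g : R) := by
    rw [hP, map_prod]
    refine Finset.prod_congr rfl fun χ _ => ?_
    rw [ha]
    simp only [map_sum, hε, MonoidAlgebra.lift_single]
    refine Finset.sum_congr rfl fun g _ => ?_
    show ((χ g : ℂ) • (X g : R)) • (1 : R) = (χ g : ℂ) • (X g : R)
    rw [smul_eq_mul, mul_one]
  have hP1 : P.coeff 1 = ∏ χ : G →* ℂˣ, ∑ g : G, (χ g : ℂ) • (X g : R) := by
    rw [← hεP]
    have hPs : P = single (1 : G) (P.coeff 1) := by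
      refine MonoidAlgebra.ext (Finsupp.ext fun g => ?_)
      rw [MonoidAlgebra.coeff_single]
      by_cases hg : g = 1
      · subst hg; rw [Finsupp.single_eq_same]
      · rw [hvanish g hg, Finsupp.single_eq_of_ne' (Ne.symm hg)]
    conv_rhs => rw [hPs]
    rw [hε]
    show P.coeff 1 = (MonoidAlgebra.lift R R G) 1 (single 1 (P.coeff 1))
    rw [MonoidAlgebra.lift_single]
    simp
  -- conclusion
  have hdet := groupDet_eq_prod (G := G) me.toEquiv
  refine MonoidAlgebra.ext (Finsupp.ext fun g => ?_)
  rw [MonoidAlgebra.coeff_single]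
  by_cases hg : g = 1
  · subst hg
    rw [Finsupp.single_eq_same]
    show P.coeff 1 = _
    rw [hP1, hdet]
  · rw [Finsupp.single_eq_of_ne' (Ne.symm hg)]
    exact hvanish g hg
end

section
/- Generalization of Dedekind's theorem: Let G be a finite abelian group and H a subgroup. Then there exist homogeneous polynomials A_h ∈ ℂ[x_g; g ∈ G] for h ∈ H, each of degree [G:H], such that the group determinant factors as Θ(G) = ∏_{χ ∈ Ĥ} ∑_{h ∈ H} χ(h) A_h. If H = G, one can take A_h = x_h, recovering Dedekind's theorem. -/
open MvPolynomial Matrix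
open scoped Kronecker

section Aux

variable {Γ : Type*} [CommGroup Γ] [Fintype Γ]

private lemma dedekind_aux_sum_char {ψ : Γ →* ℂˣ} (hψ : ψ ≠ 1) :
    ∑ h : Γ, (ψ h : ℂ) = 0 := by
  obtain ⟨b, hb⟩ : ∃ b, ψ b ≠ 1 := by
    by_contra hc
    push_neg at hc
    exact hψ (MonoidHom.ext fun x => by simpa using hc x)
  have hb' : (ψ b : ℂ) ≠ 1 := fun hcon => hb (Units.val_eq_one.mp hcon)
  have key : (ψ b : ℂ) * ∑ h : Γ, (ψ h : ℂ) = ∑ h : Γ, (ψ h : ℂ) := by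
    rw [Finset.mul_sum]
    calc ∑ h : Γ, (ψ b : ℂ) * (ψ h : ℂ)
        = ∑ h : Γ, (ψ (b * h) : ℂ) := by
          refine Finset.sum_congr rfl fun h _ => ?_
          rw [_root_.map_mul, Units.val_mul]
      _ = ∑ h : Γ, (ψ h : ℂ) := Equiv.sum_comp (Equiv.mulLeft b) (fun h => (ψ h : ℂ))
  have h0 : ((ψ b : ℂ) - 1) * ∑ h : Γ, (ψ h : ℂ) = 0 := by
    rw [sub_mul, one_mul, key, sub_self]
  rcases mul_eq_zero.mp h0 with h | h
  · exact absurd (sub_eq_zero.mp h) hb'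
  · exact h

private lemma dedekind_aux_enough : HasEnoughRootsOfUnity ℂ (Monoid.exponent Γ) := by
  have : NeZero ((Monoid.exponent Γ : ℂ)) :=
    ⟨by exact_mod_cast Monoid.exponent_ne_zero_of_finite (G := Γ)⟩
  infer_instance

private lemma dedekind_aux_sum_dual [Fintype (Γ →* ℂˣ)] {a : Γ} (ha : a ≠ 1) :
    ∑ ψ : Γ →* ℂˣ, (ψ a : ℂ) = 0 := by
  have := dedekind_aux_enough (Γ := Γ)
  obtain ⟨φ, hφ⟩ := CommGroup.exists_apply_ne_one_of_hasEnoughRootsOfUnity Γ ℂ ha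
  have hφ' : (φ a : ℂ) ≠ 1 := fun hcon => hφ (Units.val_eq_one.mp hcon)
  have key : (φ a : ℂ) * ∑ ψ : Γ →* ℂˣ, (ψ a : ℂ) = ∑ ψ : Γ →* ℂˣ, (ψ a : ℂ) := by
    rw [Finset.mul_sum]
    calc ∑ ψ : Γ →* ℂˣ, (φ a : ℂ) * (ψ a : ℂ)
        = ∑ ψ : Γ →* ℂˣ, (((φ * ψ) a : ℂˣ) : ℂ) := by
          refine Finset.sum_congr rfl fun ψ _ => ?_
          rw [MonoidHom.mul_apply, Units.val_mul]
      _ = ∑ ψ : Γ →* ℂˣ, (ψ a : ℂ) :=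
          Equiv.sum_comp (Equiv.mulLeft φ) (fun ψ : Γ →* ℂˣ => (ψ a : ℂ))
  have h0 : ((φ a : ℂ) - 1) * ∑ ψ : Γ →* ℂˣ, (ψ a : ℂ) = 0 := by
    rw [sub_mul, one_mul, key, sub_self]
  rcases mul_eq_zero.mp h0 with h | h
  · exact absurd (sub_eq_zero.mp h) hφ'
  · exact h

private lemma dedekind_aux_card_dual [Fintype (Γ →* ℂˣ)] :
    Fintype.card (Γ →* ℂˣ) = Fintype.card Γ := by
  have := dedekind_aux_enough (Γ := Γ)
  exact Fintype.card_congr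
    (CommGroup.monoidHom_mulEquiv_of_hasEnoughRootsOfUnity Γ ℂ).some.toEquiv

private lemma dedekind_aux_det_homog {ι : Type*} [Fintype ι] [DecidableEq ι] {σ : Type*}
    (M : Matrix ι ι (MvPolynomial σ ℂ)) (hM : ∀ i j, (M i j).IsHomogeneous 1) :
    M.det.IsHomogeneous (Fintype.card ι) := by
  rw [Matrix.det_apply]
  apply MvPolynomial.IsHomogeneous.sum
  intro τ _
  have h1 : Equiv.Perm.sign τ • ∏ i, M (τ i) i
      = ((Equiv.Perm.sign τ : ℤ) : MvPolynomial σ ℂ) * ∏ i, M (τ i) i := by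
    rw [Units.smul_def, zsmul_eq_mul]
  rw [h1]
  have h0 : (((Equiv.Perm.sign τ : ℤ) : MvPolynomial σ ℂ)).IsHomogeneous 0 := by
    rw [← map_intCast (MvPolynomial.C : ℂ →+* MvPolynomial σ ℂ)]
    exact isHomogeneous_C _ _
  have hp := MvPolynomial.IsHomogeneous.prod Finset.univ (fun i => M (τ i) i) (fun _ => 1)
    (fun i _ => hM _ _)
  simpa using h0.mul hp

end Aux

/-- Generalization of Dedekind's theorem: for a finite abelian group `G` and subgroup `H`,
there are homogeneous polynomials `A_h` of degree `[G : H]` with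
`Θ(G) = ∏_{χ ∈ Ĥ} ∑_{h ∈ H} χ(h) A_h`; if `H = G` one can take `A_h = x_h`. -/
theorem dedekind_generalization (G : Type*) [CommGroup G] [Fintype G] [DecidableEq G]
    (H : Subgroup G) [Fintype (H →* ℂˣ)] [Fintype H] :
    ∃ A : H → MvPolynomial G ℂ,
      (∀ h : H, (A h).IsHomogeneous H.index) ∧
      (Matrix.det (Matrix.of fun g h : G => (MvPolynomial.X (g * h⁻¹) : MvPolynomial G ℂ))
        = ∏ χ : H →* ℂˣ, ∑ h : H, (χ h : ℂ) • A h) ∧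
      (H = ⊤ → ∀ h : H, A h = MvPolynomial.X (h : G)) := by
  classical
  set R := MvPolynomial G ℂ with hR
  set ι := G ⧸ H with hι
  haveI : Fintype ι := Fintype.ofFinite _
  set s : ι → G := Quotient.out with hs_def
  have hs : ∀ q : ι, ((s q : G) : ι) = q := fun q => QuotientGroup.out_eq' q
  -- the transversal equivalence
  have e_bij : Function.Bijective (fun p : ι × H => s p.1 * (p.2 : G)) := by
    constructor
    · rintro ⟨i, h⟩ ⟨j, h'⟩ hp
      simp only at hp
      have hij : i = j := by
        have h2 : ((s i * (h : G) : G) : ι) = ((s j * (h' : G) : G) : ι) := by rw [hp]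
        rwa [QuotientGroup.mk_mul_of_mem _ h.2, QuotientGroup.mk_mul_of_mem _ h'.2,
          hs, hs] at h2
      subst hij
      exact Prod.ext rfl (Subtype.ext (mul_left_cancel hp))
    · intro g
      refine ⟨⟨(g : ι), ⟨(s (g : ι))⁻¹ * g, ?_⟩⟩, ?_⟩
      · rw [← QuotientGroup.eq]
        exact hs _
      · simp [mul_inv_cancel_left]
  set e : ι × H ≃ G := Equiv.ofBijective _ e_bij with he_def
  have he : ∀ p : ι × H, e p = s p.1 * (p.2 : G) := fun p => rfl
  -- the block matrices
  set B : (H →* ℂˣ) → Matrix ι ι R := fun χ => Matrix.of fun i j =>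
    ∑ u : H, MvPolynomial.C (((χ u)⁻¹ : ℂˣ) : ℂ) * MvPolynomial.X (s i * (u : G) * (s j)⁻¹)
    with hB
  have hBhom : ∀ χ i j, ((B χ) i j).IsHomogeneous 1 := by
    intro χ i j
    exact MvPolynomial.IsHomogeneous.sum _ _ _ fun u _ => isHomogeneous_C_mul_X _ _
  -- the candidate polynomials
  set A : H → R := fun h => ∑ ψ : H →* ℂˣ,
      (((Fintype.card H : ℂ))⁻¹ * ((ψ h : ℂˣ) : ℂ)) • (B ψ).det with hA
  have hcard : Fintype.card (H →* ℂˣ) = Fintype.card H := dedekind_aux_card_dual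
  have hcard0 : ((Fintype.card H : ℂ)) ≠ 0 := by
    exact_mod_cast Fintype.card_ne_zero
  have hindex : H.index = Fintype.card ι := by
    rw [Subgroup.index_eq_card, Nat.card_eq_fintype_card]
  refine ⟨A, ?_, ?_, ?_⟩
  · -- homogeneity
    intro h
    rw [hA, hindex, ← MvPolynomial.mem_homogeneousSubmodule]
    apply Submodule.sum_mem
    intro ψ _
    apply Submodule.smul_mem
    rw [MvPolynomial.mem_homogeneousSubmodule]
    exact dedekind_aux_det_homog _ (hBhom ψ)
  · -- the factorization
    set c : H ≃ (H →* ℂˣ) := (Fintype.equivOfCardEq hcard).symm with hc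
    set T : Matrix H H ℂ := Matrix.of fun h p => ((c p h : ℂˣ) : ℂ) with hT
    set W : Matrix H H ℂ := Matrix.of fun p h =>
      ((Fintype.card H : ℂ))⁻¹ * (((c p h)⁻¹ : ℂˣ) : ℂ) with hW
    have hWT : W * T = 1 := by
      ext p q
      rw [Matrix.mul_apply]
      simp only [hW, hT, Matrix.of_apply]
      rw [show ∑ h : H, ((Fintype.card H : ℂ))⁻¹ * (((c p h)⁻¹ : ℂˣ) : ℂ) * ((c q h : ℂˣ) : ℂ)
          = ((Fintype.card H : ℂ))⁻¹ * ∑ h : H, (((c q * (c p)⁻¹) h : ℂˣ) : ℂ) by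
        rw [Finset.mul_sum]
        refine Finset.sum_congr rfl fun h _ => ?_
        simp only [MonoidHom.mul_apply, MonoidHom.inv_apply, Units.val_mul,
          Units.val_inv_eq_inv_val]
        ring]
      by_cases hpq : p = q
      · subst hpq
        simp only [Matrix.one_apply_eq]
        rw [show ∑ h : H, (((c p * (c p)⁻¹) h : ℂˣ) : ℂ) = (Fintype.card H : ℂ) by
          simp [mul_inv_cancel]]
        exact inv_mul_cancel₀ hcard0
      · have hne : c q * (c p)⁻¹ ≠ 1 := fun hcon =>
          hpq (c.injective (mul_inv_eq_one.mp hcon)).symm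
        rw [dedekind_aux_sum_char hne, Matrix.one_apply_ne hpq, mul_zero]
    have hTW : T * W = 1 := mul_eq_one_comm.mpr hWT
    set U : Matrix (ι × H) (ι × H) R := (1 : Matrix ι ι R) ⊗ₖ (T.map MvPolynomial.C) with hU
    set V : Matrix (ι × H) (ι × H) R := (1 : Matrix ι ι R) ⊗ₖ (W.map MvPolynomial.C) with hV
    have hmapone : (1 : Matrix H H ℂ).map (MvPolynomial.C (σ := G)) = 1 := by
      ext a b
      by_cases hab : a = b <;> simp [Matrix.one_apply, hab]
    have hUV : U * V = 1 := by
      rw [hU, hV, ← Matrix.mul_kronecker_mul, Matrix.one_mul,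
        ← Matrix.map_mul, hTW, hmapone, Matrix.one_kronecker_one]
    set N : Matrix (ι × H) (ι × H) R :=
      Matrix.blockDiagonal (fun p : H => B (c p)) with hN
    set M' : Matrix (ι × H) (ι × H) R :=
      (Matrix.of fun g h : G => (MvPolynomial.X (g * h⁻¹) : R)).submatrix e e with hM'
    -- the key intertwining relation
    have key : M' * U = U * N := by
      refine Matrix.ext fun x y => ?_
      obtain ⟨i, h⟩ := x
      obtain ⟨k, p⟩ := y
      rw [Matrix.mul_apply, Matrix.mul_apply, Fintype.sum_prod_type, Fintype.sum_prod_type]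
      have hLterm : ∀ (j : ι) (h' : H), M' (i, h) (j, h') * U (j, h') (k, p)
          = if j = k
            then MvPolynomial.X (s i * (h : G) * (s k * (h' : G))⁻¹)
              * MvPolynomial.C ((c p h' : ℂˣ) : ℂ)
            else 0 := by
        intro j h'
        simp only [hM', hU, hT, Matrix.submatrix_apply, Matrix.of_apply,
          Matrix.kroneckerMap_apply, Matrix.map_apply, Matrix.one_apply, he]
        by_cases hj : j = k
        · subst hj; simp
        · simp [hj]
      have hRterm : ∀ (j : ι) (q : H), U (i, h) (j, q) * N (j, q) (k, p)
          = if j = i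
            then (if q = p
              then MvPolynomial.C ((c p h : ℂˣ) : ℂ) * (B (c p)) i k
              else 0)
            else 0 := by
        intro j q
        simp only [hU, hN, hT, Matrix.kroneckerMap_apply, Matrix.map_apply,
          Matrix.of_apply, Matrix.one_apply, Matrix.blockDiagonal_apply]
        by_cases hj : j = i
        · subst hj
          by_cases hq : q = p
          · subst hq; simp
          · simp [hq]
        · have hij : ¬ (i = j) := fun hcon => hj hcon.symm
          simp [hij, hj]
      simp only [hLterm, hRterm]
      simp only [Finset.sum_ite_irrel, Finset.sum_const_zero, Finset.sum_ite_eq',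
        Finset.mem_univ, if_true]
      rw [Finset.sum_ite_eq', Finset.sum_ite_eq', if_pos (Finset.mem_univ _),
        if_pos (Finset.mem_univ _)]
      -- now a plain sum identity over H
      rw [hB]
      simp only [Matrix.of_apply, Finset.mul_sum]
      refine Fintype.sum_equiv (M := R) ((Equiv.inv H).trans (Equiv.mulLeft h)) _ _ fun h' => ?_
      simp only [Equiv.trans_apply, Equiv.inv_apply, Equiv.coe_mulLeft]
      have hgrp : s i * (h : G) * (s k * (h' : G))⁻¹
          = s i * ((h * h'⁻¹ : H) : G) * (s k)⁻¹ := by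
        push_cast
        rw [_root_.mul_inv_rev]
        simp [mul_comm, mul_assoc, mul_left_comm]
      have hchar : (((c p) h' : ℂˣ) : ℂ)
          = (((c p) h : ℂˣ) : ℂ) * ((((c p) (h * h'⁻¹))⁻¹ : ℂˣ) : ℂ) := by
        rw [← Units.val_mul]
        congr 1
        rw [eq_mul_inv_iff_mul_eq, ← _root_.map_mul]
        congr 1
        rw [mul_comm, inv_mul_cancel_right]
      rw [hgrp, hchar, MvPolynomial.C_mul]
      ring
    -- deduce the determinant identity
    have hdetUV : U.det * V.det = 1 := by
      rw [← Matrix.det_mul, hUV, Matrix.det_one]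
    have hUunit : IsUnit U.det := IsUnit.of_mul_eq_one _ hdetUV
    have hMN : M'.det = N.det := by
      have h1 : M'.det * U.det = U.det * N.det := by
        rw [← Matrix.det_mul, ← Matrix.det_mul, key]
      have h2 : U.det * M'.det = U.det * N.det := by rw [mul_comm U.det M'.det]; exact h1
      exact hUunit.mul_left_cancel h2
    -- the sum identity : ∑ h, χ h • A h = det (B χ⁻¹)
    have hsum : ∀ χ : H →* ℂˣ, ∑ h : H, ((χ h : ℂˣ) : ℂ) • A h = (B χ⁻¹).det := by
      intro χ
      calc ∑ h : H, ((χ h : ℂˣ) : ℂ) • A h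
          = ∑ h : H, ∑ ψ : H →* ℂˣ,
              (((χ h : ℂˣ) : ℂ) * (((Fintype.card H : ℂ))⁻¹ * ((ψ h : ℂˣ) : ℂ)))
                • (B ψ).det := by
            simp only [hA, Finset.smul_sum, smul_smul]
        _ = ∑ ψ : H →* ℂˣ, ∑ h : H,
              (((χ h : ℂˣ) : ℂ) * (((Fintype.card H : ℂ))⁻¹ * ((ψ h : ℂˣ) : ℂ)))
                • (B ψ).det := Finset.sum_comm
        _ = ∑ ψ : H →* ℂˣ,
              (((Fintype.card H : ℂ))⁻¹ * ∑ h : H, (((χ * ψ) h : ℂˣ) : ℂ)) • (B ψ).det := by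
            refine Finset.sum_congr rfl fun ψ _ => ?_
            rw [← Finset.sum_smul]
            congr 1
            rw [Finset.mul_sum]
            refine Finset.sum_congr rfl fun h _ => ?_
            rw [MonoidHom.mul_apply, Units.val_mul]
            ring
        _ = (B χ⁻¹).det := by
            rw [Finset.sum_eq_single χ⁻¹ ?_ (fun hmem => absurd (Finset.mem_univ χ⁻¹) hmem)]
            · rw [show ∑ h : H, (((χ * χ⁻¹) h : ℂˣ) : ℂ) = (Fintype.card H : ℂ) by
                simp [mul_inv_cancel]]
              rw [inv_mul_cancel₀ hcard0, one_smul]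
            · intro ψ _ hψ
              have hne : χ * ψ ≠ 1 := fun hcon => hψ (eq_inv_of_mul_eq_one_right (α := H →* ℂˣ) hcon)
              rw [dedekind_aux_sum_char hne, mul_zero, zero_smul]
    -- put it all together
    calc (Matrix.of fun g h : G => (MvPolynomial.X (g * h⁻¹) : R)).det
        = M'.det := (Matrix.det_submatrix_equiv_self e _).symm
      _ = N.det := hMN
      _ = ∏ p : H, (B (c p)).det := Matrix.det_blockDiagonal _
      _ = ∏ χ : H →* ℂˣ, (B χ).det := Fintype.prod_equiv c _ _ fun p => rfl
      _ = ∏ χ : H →* ℂˣ, (B χ⁻¹).det :=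
          (Fintype.prod_equiv (Equiv.inv (H →* ℂˣ)) _ _ fun χ => rfl).symm
      _ = ∏ χ : H →* ℂˣ, ∑ h : H, ((χ h : ℂˣ) : ℂ) • A h :=
          Finset.prod_congr rfl fun χ _ => (hsum χ).symm
  · -- the H = ⊤ case
    intro hH h
    haveI : Subsingleton ι := by
      rw [hι, hH]
      exact QuotientGroup.subsingleton_quotient_top
    haveI : Unique ι := uniqueOfSubsingleton ((1 : G) : ι)
    have hdet : ∀ ψ : H →* ℂˣ, (B ψ).det
        = ∑ u : H, MvPolynomial.C (((ψ u)⁻¹ : ℂˣ) : ℂ) * MvPolynomial.X ((u : G)) := by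
      intro ψ
      rw [Matrix.det_unique, hB]
      simp only [Matrix.of_apply]
      refine Finset.sum_congr rfl fun u _ => ?_
      congr 1
      rw [mul_right_comm, mul_inv_cancel, one_mul]
    calc A h = ∑ ψ : H →* ℂˣ, ∑ u : H,
          MvPolynomial.C (((Fintype.card H : ℂ))⁻¹ * (((ψ (h * u⁻¹)) : ℂˣ) : ℂ))
            * MvPolynomial.X ((u : G)) := by
          rw [hA]
          refine Finset.sum_congr rfl fun ψ _ => ?_
          rw [hdet ψ, Finset.smul_sum]
          refine Finset.sum_congr rfl fun u _ => ?_
          rw [MvPolynomial.smul_eq_C_mul, ← mul_assoc, ← MvPolynomial.C_mul]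
          congr 2
          rw [_root_.map_mul, map_inv, Units.val_mul, mul_assoc]
      _ = ∑ u : H, ∑ ψ : H →* ℂˣ,
          MvPolynomial.C (((Fintype.card H : ℂ))⁻¹ * (((ψ (h * u⁻¹)) : ℂˣ) : ℂ))
            * MvPolynomial.X ((u : G)) := Finset.sum_comm
      _ = ∑ u : H, (if u = h then MvPolynomial.X ((h : G)) else 0) := by
          refine Finset.sum_congr rfl fun u _ => ?_
          rw [← Finset.sum_mul, ← map_sum, ← Finset.mul_sum]
          by_cases hu : u = h
          · subst hu
            rw [if_pos rfl]
            rw [show ∑ ψ : H →* ℂˣ, (((ψ (u * u⁻¹)) : ℂˣ) : ℂ) = (Fintype.card H : ℂ) by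
              simp [mul_inv_cancel, hcard]]
            rw [inv_mul_cancel₀ hcard0, MvPolynomial.C_1, one_mul]
          · rw [if_neg hu]
            have hne : h * u⁻¹ ≠ 1 := fun hcon => hu (eq_of_mul_inv_eq_one hcon).symm
            rw [dedekind_aux_sum_dual hne, mul_zero, MvPolynomial.C_0, zero_mul]
      _ = MvPolynomial.X ((h : G)) := by
          rw [Finset.sum_ite_eq' Finset.univ h (fun _ => MvPolynomial.X ((h : G)))]
          simp
end

section
/- Inverse formula in the group algebra: Let G be a finite abelian group and x_g ∈ ℂ for g ∈ G with Θ(G) = det(x_{gh^{-1}})_{g,h} ≠ 0. Then the element ∑_{g ∈ G} x_g g of ℂ[G] is invertible with inverse (1/Θ(G)) · ∏_{χ ∈ Ĝ, χ ≠ χ_1} (∑_{g ∈ G} χ(g) x_g g), where χ_1 is the trivial character. -/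
namespace GroupAlgInv

variable {G : Type*} [CommGroup G]

noncomputable def charEquiv : (G →* ℂˣ) ≃ AddChar (Additive G) ℂ where
  toFun χ :=
    { toFun := fun a => (χ a.toMul : ℂ)
      map_zero_eq_one' := by simp
      map_add_eq_mul' := fun a b => by simp }
  invFun ψ :=
    { toFun := fun g => Units.mk (ψ (Additive.ofMul g)) (ψ (Additive.ofMul g⁻¹))
        (by rw [← AddChar.map_add_eq_mul]; simp)
        (by rw [← AddChar.map_add_eq_mul]; simp)
      map_one' := by ext; simp
      map_mul' := fun a b => by ext; simp [AddChar.map_add_eq_mul] }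
  left_inv χ := by ext g; simp
  right_inv ψ := by ext a; simp

@[simp] lemma charEquiv_apply (χ : G →* ℂˣ) (a : Additive G) :
    charEquiv χ a = (χ a.toMul : ℂ) := rfl

variable [Fintype G] [DecidableEq G]

noncomputable instance : Fintype (G →* ℂˣ) := Fintype.ofEquiv _ (charEquiv (G := G)).symm

omit [DecidableEq G] in
lemma card_char : Fintype.card (G →* ℂˣ) = Fintype.card G := by
  calc Fintype.card (G →* ℂˣ) = Fintype.card (AddChar (Additive G) ℂ) :=
        Fintype.card_congr (charEquiv (G := G))
    _ = Fintype.card (Additive G) := AddChar.card_eq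
    _ = Fintype.card G := Fintype.card_additive G

lemma sum_char (g : G) :
    ∑ χ : G →* ℂˣ, (χ g : ℂ) = if g = 1 then (Fintype.card G : ℂ) else 0 := by
  have h := Fintype.sum_equiv (charEquiv (G := G)) (fun χ => (χ g : ℂ))
    (fun ψ => ψ (Additive.ofMul g)) (fun χ => rfl)
  rw [h, AddChar.sum_apply_eq_ite]
  simp

/-- Evaluation of the group algebra at a character. -/
noncomputable def Φ (ψ : G →* ℂˣ) : MonoidAlgebra ℂ G →ₐ[ℂ] ℂ :=
  MonoidAlgebra.lift ℂ ℂ G ((Units.coeHom ℂ).comp ψ)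

@[simp] lemma Φ_single (ψ : G →* ℂˣ) (g : G) (a : ℂ) :
    Φ ψ (MonoidAlgebra.single g a) = a * (ψ g : ℂ) := by
  simp [Φ, MonoidAlgebra.lift_single, smul_eq_mul]

lemma Φ_apply (ψ : G →* ℂˣ) (v : MonoidAlgebra ℂ G) :
    Φ ψ v = ∑ g : G, v.coeff g * (ψ g : ℂ) := by
  conv_lhs => rw [← MonoidAlgebra.sum_coeff_single v]
  rw [map_finsuppSum]
  rw [Finsupp.sum_fintype _ _ (by simp)]
  simp [Φ_single]

end GroupAlgInv


/-- Inverse formula: if the group determinant of `(x_g) ∈ ℂ^G` is nonzero, then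
`∑ x_g g` is invertible in `ℂ[G]` with inverse
`Θ(G)⁻¹ ∏_{χ ≠ χ₁} ∑ χ(g) x_g g`. -/
theorem group_algebra_inverse_formula (G : Type*) [CommGroup G] [Fintype G] [DecidableEq G]
    [Fintype {χ : G →* ℂˣ // χ ≠ 1}] (x : G → ℂ)
    (hΘ : Matrix.det (Matrix.of fun g h : G => x (g * h⁻¹)) ≠ 0) :
    (∑ g : G, MonoidAlgebra.single g (x g)) *
      ((Matrix.det (Matrix.of fun g h : G => x (g * h⁻¹)))⁻¹ •
        ∏ χ : {χ : G →* ℂˣ // χ ≠ 1},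
          ∑ g : G, MonoidAlgebra.single g ((χ.1 g : ℂ) * x g)) = 1 := by
  classical
  obtain ⟨e⟩ : Nonempty (G ≃ (G →* ℂˣ)) :=
    ⟨Fintype.equivOfCardEq (GroupAlgInv.card_char (G := G)).symm⟩
  set n : ℂ := (Fintype.card G : ℂ) with hn
  have hn0 : n ≠ 0 := Nat.cast_ne_zero.2 Fintype.card_ne_zero
  set M : Matrix G G ℂ := Matrix.of fun g h => x (g * h⁻¹) with hM
  set R : Matrix G G ℂ := Matrix.of (fun g h => ((e g) h : ℂ)) with hR
  set Q : Matrix G G ℂ := Matrix.of (fun g h => (((e h) g⁻¹ : ℂˣ) : ℂ) / n) with hQ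
  -- orthogonality : Q * R = 1
  have hQR : Q * R = 1 := by
    ext g h
    simp only [Matrix.mul_apply, hQ, hR, Matrix.of_apply]
    have step : ∀ k : G, (((e k) g⁻¹ : ℂˣ) : ℂ) / n * ((e k) h : ℂ)
        = ((e k) (g⁻¹ * h) : ℂ) / n := by
      intro k; rw [map_mul]; push_cast; ring
    rw [Finset.sum_congr rfl (fun k _ => step k), ← Finset.sum_div]
    rw [Fintype.sum_equiv e (fun k => ((e k) (g⁻¹ * h) : ℂ))
      (fun χ => (χ (g⁻¹ * h) : ℂ)) (fun k => rfl)]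
    rw [GroupAlgInv.sum_char]
    by_cases hgh : g = h
    · subst hgh; simp [Matrix.one_apply, hn0, hn]
    · have h1 : g⁻¹ * h ≠ 1 := by
        simpa [inv_mul_eq_one] using hgh
      simp [h1, Matrix.one_apply, hgh]
  have hRQ : R * Q = 1 := mul_eq_one_comm.mp hQR
  -- the Fourier coefficients
  set c : (G →* ℂˣ) → ℂ := fun χ => ∑ k : G, (χ k : ℂ) * x k with hc
  -- diagonalization: R * M = diagonal (c ∘ e) * R
  have hRM : R * M = Matrix.diagonal (fun g => c (e g)) * R := by
    ext g h
    rw [Matrix.diagonal_mul]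
    simp only [Matrix.mul_apply, hR, hM, Matrix.of_apply]
    rw [← Equiv.sum_comp (Equiv.mulRight h)
      (fun k => ((e g) k : ℂ) * x (k * h⁻¹))]
    simp only [Equiv.coe_mulRight, mul_inv_cancel_right, map_mul]
    rw [hc]
    rw [Finset.sum_mul]
    apply Finset.sum_congr rfl
    intro k _
    push_cast
    ring
  -- determinant formula
  have hRdet : R.det ≠ 0 := by
    intro h0
    have := congrArg Matrix.det hRQ
    rw [Matrix.det_mul, h0, Matrix.det_one, zero_mul] at this
    exact zero_ne_one this
  have hdet : M.det = ∏ χ : G →* ℂˣ, c χ := by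
    have h1 : R.det * M.det = R.det * ∏ g : G, c (e g) := by
      have := congrArg Matrix.det hRM
      rw [Matrix.det_mul, Matrix.det_mul, Matrix.det_diagonal] at this
      rw [this]; ring
    have h2 := mul_left_cancel₀ hRdet h1
    rw [h2, ← Equiv.prod_comp e c]
  -- the factors
  set T : (G →* ℂˣ) → MonoidAlgebra ℂ G :=
    fun χ => ∑ g : G, MonoidAlgebra.single g ((χ g : ℂ) * x g) with hT
  have hΦT : ∀ ψ χ : G →* ℂˣ, GroupAlgInv.Φ ψ (T χ) = c (ψ * χ) := by
    intro ψ χ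
    rw [hT, map_sum, hc]
    apply Finset.sum_congr rfl
    intro g _
    rw [GroupAlgInv.Φ_single, MonoidHom.mul_apply, Units.val_mul]
    ring
  have hΦprod : ∀ ψ : G →* ℂˣ, GroupAlgInv.Φ ψ (∏ χ : G →* ℂˣ, T χ) = M.det := by
    intro ψ
    rw [map_prod]
    calc ∏ χ : G →* ℂˣ, GroupAlgInv.Φ ψ (T χ) = ∏ χ : G →* ℂˣ, c (ψ * χ) :=
          Finset.prod_congr rfl fun χ _ => hΦT ψ χ
      _ = ∏ χ : G →* ℂˣ, c χ := Equiv.prod_comp (Equiv.mulLeft ψ) c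
      _ = M.det := hdet.symm
  -- injectivity of the Fourier evaluation
  have hinj : ∀ u v : MonoidAlgebra ℂ G, (∀ ψ : G →* ℂˣ, GroupAlgInv.Φ ψ u = GroupAlgInv.Φ ψ v) → u = v := by
    intro u v h
    set a : G → ℂ := fun g => u.coeff g - v.coeff g with hA
    have ha : ∀ ψ : G →* ℂˣ, ∑ g : G, a g * (ψ g : ℂ) = 0 := by
      intro ψ
      have h' := h ψ
      rw [GroupAlgInv.Φ_apply, GroupAlgInv.Φ_apply] at h'
      simp only [hA, sub_mul]
      rw [Finset.sum_sub_distrib, h', sub_self]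
    have hRa : R.mulVec a = 0 := by
      funext g
      simp only [Matrix.mulVec, dotProduct, hR, Matrix.of_apply, Pi.zero_apply]
      rw [← ha (e g)]
      exact Finset.sum_congr rfl fun k _ => mul_comm _ _
    have ha0 : a = 0 := by
      have h2 : (Q * R).mulVec a = Q.mulVec 0 := by
        rw [← Matrix.mulVec_mulVec, hRa]
      rwa [hQR, Matrix.one_mulVec, Matrix.mulVec_zero] at h2
    ext g
    have := congrFun ha0 g
    simpa [hA, sub_eq_zero] using this
  -- the key identity
  have key : ∏ χ : G →* ℂˣ, T χ = M.det • (1 : MonoidAlgebra ℂ G) := by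
    apply hinj
    intro ψ
    rw [hΦprod ψ, map_smul, map_one, smul_eq_mul, mul_one]
  -- conclude
  have hS : (∑ g : G, MonoidAlgebra.single g (x g)) = T 1 := by
    rw [hT]; simp
  have hsub : (∏ χ : {χ : G →* ℂˣ // χ ≠ 1},
      ∑ g : G, MonoidAlgebra.single g ((χ.1 g : ℂ) * x g))
      = ∏ χ ∈ Finset.univ.erase (1 : G →* ℂˣ), T χ :=
    (Finset.prod_subtype _ (by simp) T).symm
  rw [hsub, hS, mul_smul_comm, Finset.mul_prod_erase Finset.univ T (Finset.mem_univ 1), key,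
    smul_smul, inv_mul_cancel₀ hΘ, one_smul]
end

section
/- Let G be a finite abelian group and H a subgroup with coset representatives χ_1, ..., χ_k (k = |H|) of Ĝ_H in Ĝ. Then ∏_{χ ∈ Ĝ} ∑_{g ∈ G} χ(g) x_g g = ∏_{i=1}^k T_{χ_i}( ∏_{χ ∈ Ĝ_H} ∑_{g ∈ G} χ(g) x_g g ) in ℂ[x_g][G], where T_χ(∑ A_g g) = ∑ χ(g) A_g g. -/
/-- The twist operator `T_χ` on the group algebra, multiplying the coefficient
of `g` by `χ g`. -/
noncomputable def twist {G : Type*} [Group G] [Fintype G] (χ : G →* ℂˣ)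
    (α : MonoidAlgebra (MvPolynomial G ℂ) G) : MonoidAlgebra (MvPolynomial G ℂ) G :=
  ∑ g : G, MonoidAlgebra.single g ((χ g : ℂ) • α.coeff g)

section aux

variable {G : Type*} [CommGroup G] [Fintype G]

/-- The twist operator as an algebra homomorphism. -/
noncomputable def twistHom (χ : G →* ℂˣ) :
    MonoidAlgebra (MvPolynomial G ℂ) G →ₐ[MvPolynomial G ℂ]
      MonoidAlgebra (MvPolynomial G ℂ) G :=
  MonoidAlgebra.lift (MvPolynomial G ℂ) (MonoidAlgebra (MvPolynomial G ℂ) G) G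
    { toFun := fun g => MonoidAlgebra.single g (MvPolynomial.C (χ g : ℂ)),
      map_one' := by simp [MonoidAlgebra.one_def],
      map_mul' := fun g h => by
        simp [MonoidAlgebra.single_mul_single, map_mul] }

lemma twist_single (χ : G →* ℂˣ) (g : G) (a : MvPolynomial G ℂ) :
    twist χ (MonoidAlgebra.single g a) = MonoidAlgebra.single g ((χ g : ℂ) • a) := by
  unfold twist
  rw [Finset.sum_eq_single g]
  · rw [MonoidAlgebra.coeff_single, Finsupp.single_eq_same]
  · intro h _ hne
    simp [MonoidAlgebra.coeff_single, Finsupp.single_eq_of_ne' (Ne.symm hne)]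
  · intro hg; exact absurd (Finset.mem_univ g) hg

lemma twist_eq_twistHom (χ : G →* ℂˣ) (α : MonoidAlgebra (MvPolynomial G ℂ) G) :
    twist χ α = twistHom χ α := by
  induction α using MonoidAlgebra.induction_linear with
  | zero => simp [twist]
  | add a b ha hb =>
    have : twist χ (a + b) = twist χ a + twist χ b := by
      simp [twist, MonoidAlgebra.coeff_add, Finsupp.add_apply, smul_add, Finsupp.single_add, Finset.sum_add_distrib]
    rw [this, ha, hb, map_add]
  | single g a =>
    rw [twist_single]
    show _ = twistHom χ (MonoidAlgebra.single g a)
    unfold twistHom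
    rw [MonoidAlgebra.lift_single]
    simp only [MonoidHom.coe_mk, OneHom.coe_mk]
    rw [MonoidAlgebra.smul_single', MvPolynomial.smul_eq_C_mul, mul_comm]

lemma twist_prod {ι : Type*} (χ : G →* ℂˣ) (s : Finset ι)
    (f : ι → MonoidAlgebra (MvPolynomial G ℂ) G) :
    twist χ (∏ i ∈ s, f i) = ∏ i ∈ s, twist χ (f i) := by
  simp only [twist_eq_twistHom, map_prod]

lemma twist_charSum (χ ψ : G →* ℂˣ) :
    twist χ (∑ g : G, MonoidAlgebra.single g
        ((ψ g : ℂ) • (MvPolynomial.X g : MvPolynomial G ℂ)))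
      = ∑ g : G, MonoidAlgebra.single g
          (((χ * ψ) g : ℂ) • (MvPolynomial.X g : MvPolynomial G ℂ)) := by
  rw [twist_eq_twistHom, map_sum]
  refine Finset.sum_congr rfl fun g _ => ?_
  rw [← twist_eq_twistHom, twist_single, smul_smul]
  simp [Units.val_mul]

end aux

/-- Splitting the product over all characters of `G` along a coset decomposition of the
subgroup `Ĝ_H` of characters trivial on `H`, via the twist operators of the
representatives. -/
theorem prod_all_characters_eq_prod_twists (G : Type*) [CommGroup G] [Fintype G]
    [Fintype (G →* ℂˣ)] (H : Subgroup G)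
    (K : Subgroup (G →* ℂˣ)) (hK : ∀ χ, χ ∈ K ↔ ∀ h ∈ H, χ h = 1)
    [Fintype {ψ : G →* ℂˣ // ψ ∈ K}]
    (k : ℕ) (hk : k = Nat.card H) (χ : Fin k → (G →* ℂˣ))
    (hχ : Function.Bijective fun i => (QuotientGroup.mk (χ i) : (G →* ℂˣ) ⧸ K)) :
    (∏ ψ : G →* ℂˣ,
        ∑ g : G, MonoidAlgebra.single g ((ψ g : ℂ) • (MvPolynomial.X g : MvPolynomial G ℂ)))
      = ∏ i : Fin k, twist (χ i)
          (∏ ψ : {ψ : G →* ℂˣ // ψ ∈ K},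
            ∑ g : G, MonoidAlgebra.single g ((ψ.1 g : ℂ) • (MvPolynomial.X g : MvPolynomial G ℂ))) := by
  set F : (G →* ℂˣ) → MonoidAlgebra (MvPolynomial G ℂ) G := fun φ =>
    ∑ g : G, MonoidAlgebra.single g ((φ g : ℂ) • (MvPolynomial.X g : MvPolynomial G ℂ))
    with hF
  have hRHS : ∀ i : Fin k,
      twist (χ i) (∏ ψ : {ψ : G →* ℂˣ // ψ ∈ K}, F ψ.1)
        = ∏ ψ : {ψ : G →* ℂˣ // ψ ∈ K}, F (χ i * ψ.1) := by
    intro i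
    rw [twist_prod]
    exact Finset.prod_congr rfl fun ψ _ => twist_charSum (χ i) ψ.1
  -- the multiplication bijection
  set e : Fin k × {ψ : G →* ℂˣ // ψ ∈ K} → (G →* ℂˣ) := fun p => χ p.1 * p.2.1 with he
  have : K.Normal := ⟨fun n hn g => by convert hn using 1; ext x; simp⟩
  have heb : Function.Bijective e := by
    constructor
    · rintro ⟨i, ψ, hψ⟩ ⟨j, φ, hφ⟩ h
      simp only [he] at h
      have hquot : (QuotientGroup.mk (χ i) : (G →* ℂˣ) ⧸ K) = QuotientGroup.mk (χ j) := by
        have h1 : (QuotientGroup.mk (χ i * ψ) : (G →* ℂˣ) ⧸ K) = QuotientGroup.mk (χ j * φ) := by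
          rw [h]
        rwa [QuotientGroup.mk_mul, QuotientGroup.mk_mul,
          (QuotientGroup.eq_one_iff ψ).2 hψ, (QuotientGroup.eq_one_iff φ).2 hφ,
          mul_one, mul_one] at h1
      have hij : i = j := hχ.injective hquot
      subst hij
      have h2 : ψ = φ := by
        ext g
        have hg := DFunLike.congr_fun h g
        simp only [MonoidHom.mul_apply] at hg
        exact congrArg Units.val (mul_left_cancel hg)
      simp [h2]
    · intro φ
      obtain ⟨i, hi⟩ := hχ.surjective (QuotientGroup.mk φ)
      simp only at hi
      have hmem : (χ i)⁻¹ * φ ∈ K := by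
        rw [← QuotientGroup.eq_one_iff, QuotientGroup.mk_mul, QuotientGroup.mk_inv, hi,
          inv_mul_cancel]
      exact ⟨⟨i, ⟨(χ i)⁻¹ * φ, hmem⟩⟩, by simp only [he]; ext g; simp⟩
  calc (∏ ψ : G →* ℂˣ, F ψ)
      = ∏ p : Fin k × {ψ : G →* ℂˣ // ψ ∈ K}, F (e p) :=
        (Fintype.prod_bijective e heb _ _ (fun p => rfl)).symm
    _ = ∏ i : Fin k, ∏ ψ : {ψ : G →* ℂˣ // ψ ∈ K}, F (χ i * ψ.1) := by
        rw [Fintype.prod_prod_type]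
    _ = ∏ i : Fin k, twist (χ i) (∏ ψ : {ψ : G →* ℂˣ // ψ ∈ K}, F ψ.1) := by
        exact Finset.prod_congr rfl fun i _ => (hRHS i).symm
end
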